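/- Let 𝔅 be a unital C*-algebra and 𝔄 a *-algebra containing 𝔅 as a *-subalgebra. Let 𝔄₂ ⊆ 𝔄 be a *-subalgebra containing 𝔅, and let 𝔄₁ = 𝔅 ⊕ 𝔄₁⁰ be a *-subalgebra of 𝔄, where 𝔄₁⁰ is a *-subalgebra with 𝔅·𝔄₁⁰ ⊆ 𝔄₁⁰ and 𝔄₁⁰·𝔅 ⊆ 𝔄₁⁰. Suppose every element of 𝔄 is a finite sum of products b₀a₁b₁a₂⋯aₙbₙ with n ≥ 0, b_j ∈ 𝔄₂ and a_j ∈ 𝔄₁⁰. Let Φ : 𝔄 → 𝔅 be a conditional expectation such that Φ₁ = Φ|_{𝔄₁} and Φ₂ = Φ|_{𝔄₂} are positive, and such that for all a, a' ∈ 𝔄₁⁰, b ∈ 𝔄₂ and α, β ∈ 𝔄: Φ(α a b a' β) = Φ(α a Φ₂(b) a' β), Φ(b a β) = Φ₂(b) Φ(a β), Φ(α a b) = Φ(α a) Φ₂(b) (and the corresponding relations with α and/or β omitted). Then Φ is positive: Φ(x*x) ≥ 0 in 𝔅 for every x ∈ 𝔄. -/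

import Mathlib

open scoped NNReal

section MonotonicHelpers
variable {B : Type*} [CStarAlgebra B] [PartialOrder B] [StarOrderedRing B]

private lemma my_algebraMap_mul_nonneg (δ : ℝ) (hδ : 0 ≤ δ) (x : B) (hx : 0 ≤ x) :
    0 ≤ algebraMap ℝ B δ * x := by
  rw [StarOrderedRing.nonneg_iff] at hx
  induction hx using AddSubmonoid.closure_induction with
  | mem z hz =>
    obtain ⟨s, rfl⟩ := hz
    have key : algebraMap ℝ B δ * (star s * s)
        = star (algebraMap ℝ B (Real.sqrt δ) * s) * (algebraMap ℝ B (Real.sqrt δ) * s) := by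
      have hst : star (algebraMap ℝ B (Real.sqrt δ)) = algebraMap ℝ B (Real.sqrt δ) := by
        rw [Algebra.algebraMap_eq_smul_one, star_smul, star_trivial, star_one]
      rw [star_mul, hst]
      rw [mul_assoc (star s), ← mul_assoc ((algebraMap ℝ B) (Real.sqrt δ)), ← map_mul,
        Real.mul_self_sqrt hδ, ← mul_assoc, Algebra.commutes δ (star s), mul_assoc]
    rw [key]
    exact star_mul_self_nonneg _
  | zero => simp
  | add x y hx hy ihx ihy =>
    rw [mul_add]
    exact add_nonneg ihx ihy

private lemma my_nonneg_of_forall_pos (t q : B) (h : ∀ ε : ℝ, 0 < ε → 0 ≤ t + ε • q) :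
    0 ≤ t := by
  have hc : Continuous fun ε : ℝ => t + ε • q :=
    continuous_const.add (continuous_id.smul continuous_const)
  have ht : Filter.Tendsto (fun ε : ℝ => t + ε • q) (nhdsWithin 0 (Set.Ioi 0)) (nhds t) := by
    have := hc.tendsto 0
    simp only [zero_smul, add_zero] at this
    exact this.mono_left nhdsWithin_le_nhds
  refine ge_of_tendsto ht ?_
  exact eventually_mem_nhdsWithin.mono fun ε hε => h ε hε

private lemma my_cholesky (δ : ℝ) (hδ : 0 < δ) :
    ∀ (m : ℕ) (M : Fin m → Fin m → B),
      (∀ i j, M j i = star (M i j)) →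
      (∀ c : Fin m → B,
        algebraMap ℝ B δ * (∑ i, star (c i) * c i) ≤ ∑ i, ∑ j, star (c i) * M i j * c j) →
      ∃ T : Fin m → Fin m → B, ∀ i j, M i j = ∑ r, star (T r i) * T r j := by
  intro m
  induction m with
  | zero => exact fun M _ _ => ⟨0, fun i j => i.elim0⟩
  | succ m ih =>
    intro M hsa hform
    have hdpos : (0 : B) ≤ algebraMap ℝ B δ := by
      have := my_algebraMap_mul_nonneg (B := B) δ hδ.le 1 zero_le_one
      simpa using this
    have hdunit : IsUnit (algebraMap ℝ B δ) :=
      (isUnit_iff_ne_zero.mpr hδ.ne').map (algebraMap ℝ B)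
    set s : B := M 0 0 with hs
    have hpivot : algebraMap ℝ B δ ≤ s := by
      have h := hform (fun i => if i = 0 then 1 else 0)
      simpa [Finset.mul_sum, Finset.sum_ite_eq', apply_ite, mul_ite, ite_mul] using h
    have hs0 : (0 : B) ≤ s := hdpos.trans hpivot
    have hsu : IsUnit s := CStarAlgebra.isUnit_of_le _ hpivot ⟨hdpos, hdunit⟩
    have hspec : (0 : ℝ≥0) ∉ spectrum ℝ≥0 s := spectrum.zero_notMem_iff ℝ≥0 |>.mpr hsu
    set p : B := s ^ ((1 : ℝ)/2) with hp
    set q : B := s ^ (-((1 : ℝ)/2)) with hq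
    have hppos : (0:B) ≤ p := CFC.rpow_nonneg
    have hqpos : (0:B) ≤ q := CFC.rpow_nonneg
    have hpsa : star p = p := IsSelfAdjoint.of_nonneg hppos
    have hqsa : star q = q := IsSelfAdjoint.of_nonneg hqpos
    have hpq : p * q = 1 := CFC.rpow_mul_rpow_neg ((1:ℝ)/2) ⟨hs0, hsu⟩
    have hqp : q * p = 1 := CFC.rpow_neg_mul_rpow ((1:ℝ)/2) ⟨hs0, hsu⟩
    have hpp : p * p = s := by
      rw [hp, ← CFC.rpow_add hsu]
      norm_num
      exact CFC.rpow_one s hs0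
    have hqq : q * q = s ^ (-(1:ℝ)) := by
      rw [hq, ← CFC.rpow_add hsu]
      norm_num
    have hqqs : q * q * s = 1 := by
      rw [hqq]
      have h := CFC.rpow_neg_mul_rpow 1 ⟨hs0, hsu⟩
      rwa [CFC.rpow_one s hs0] at h
    have hsqq : s * (q * q) = 1 := by
      rw [hqq]
      have h := CFC.rpow_mul_rpow_neg 1 ⟨hs0, hsu⟩
      rwa [CFC.rpow_one s hs0] at h
    set S : Fin m → Fin m → B :=
      fun i j => M i.succ j.succ - M i.succ 0 * (q * q * M 0 j.succ) with hS
    have hMs0 : ∀ i : Fin m, M i.succ 0 = star (M 0 i.succ) := fun i => hsa 0 i.succ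
    have hqqsa : star (q * q) = q * q := by rw [star_mul, hqsa]
    have hSsa : ∀ i j, S j i = star (S i j) := by
      intro i j
      simp only [hS, star_sub]
      congr 1
      · exact hsa i.succ j.succ
      · rw [star_mul, star_mul, hqqsa, hMs0 i, star_star, ← hMs0 j]
        simp [mul_assoc]
    have hSform : ∀ c : Fin m → B,
        algebraMap ℝ B δ * (∑ i, star (c i) * c i) ≤ ∑ i, ∑ j, star (c i) * S i j * c j := by
      intro c
      set u : B := ∑ j, M 0 j.succ * c j with hu
      set c' : Fin (m+1) → B := Fin.cases (-(q * q * u)) c with hc'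
      have hc'0 : c' 0 = -(q * q * u) := rfl
      have hc's : ∀ i : Fin m, c' i.succ = c i := fun i => rfl
      have hstarc'0 : star (c' 0) = -(star u * (q * q)) := by
        rw [hc'0, star_neg, star_mul, hqqsa]
      have hustar : star u = ∑ i, star (c i) * M i.succ 0 := by
        rw [hu, star_sum]
        exact Finset.sum_congr rfl fun i _ => by rw [star_mul, hMs0 i]
      have hqqs0 : q * q * M 0 0 = 1 := by rw [← hs]; exact hqqs
      have h00 : star (c' 0) * M 0 0 * c' 0 = star u * (q * q) * u := by
        rw [hstarc'0, hc'0]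
        calc -(star u * (q * q)) * M 0 0 * -(q * q * u)
            = star u * ((q * q * M 0 0) * (q * q * u)) := by
              simp only [neg_mul, mul_neg, neg_neg, mul_assoc]
          _ = star u * (q * q * u) := by rw [hqqs0, one_mul]
          _ = star u * (q * q) * u := by simp only [mul_assoc]
      have hrow0 : ∑ J, star (c' 0) * M 0 J * c' J = 0 := by
        rw [Fin.sum_univ_succ, h00]
        have hterm : ∀ j : Fin m, star (c' 0) * M 0 j.succ * c' j.succ
            = -(star u * (q * q) * (M 0 j.succ * c j)) := by
          intro j
          rw [hc's j, hstarc'0, neg_mul, neg_mul, mul_assoc]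
        rw [Finset.sum_congr rfl fun j _ => hterm j]
        rw [Finset.sum_neg_distrib, ← Finset.mul_sum, ← hu, add_neg_cancel]
      have hrowi : ∀ i : Fin m, ∑ J, star (c' i.succ) * M i.succ J * c' J
          = -(star (c i) * M i.succ 0 * ((q * q) * u))
            + ∑ j, star (c i) * M i.succ j.succ * c j := by
        intro i
        rw [Fin.sum_univ_succ, hc's i, hc'0]
        rw [mul_neg]
        simp only [hc's]
      have hexp1 : ∑ I, ∑ J, star (c' I) * M I J * c' J
          = (∑ i, ∑ j, star (c i) * M i.succ j.succ * c j)
            - star u * ((q * q) * u) := by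
        rw [Fin.sum_univ_succ, hrow0, zero_add,
          Finset.sum_congr rfl fun i _ => hrowi i, Finset.sum_add_distrib]
        rw [Finset.sum_neg_distrib, ← Finset.sum_mul, ← hustar, neg_add_eq_sub]
      have hexp2 : ∑ i, ∑ j, star (c i) * S i j * c j
          = (∑ i, ∑ j, star (c i) * M i.succ j.succ * c j)
            - star u * ((q * q) * u) := by
        have hterm : ∀ i j, star (c i) * S i j * c j
            = star (c i) * M i.succ j.succ * c j
              - star (c i) * M i.succ 0 * ((q * q) * (M 0 j.succ * c j)) := by
          intro i j
          simp only [hS, mul_sub, sub_mul, mul_assoc]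
        rw [Finset.sum_congr rfl fun i _ =>
          Finset.sum_congr rfl fun j _ => hterm i j]
        rw [Finset.sum_congr rfl fun i _ => Finset.sum_sub_distrib _ _, Finset.sum_sub_distrib]
        congr 1
        have hinner : ∀ i : Fin m,
            ∑ j, star (c i) * M i.succ 0 * ((q * q) * (M 0 j.succ * c j))
              = (star (c i) * M i.succ 0) * ((q * q) * u) := by
          intro i
          rw [← Finset.mul_sum, ← Finset.mul_sum, ← hu]
        rw [Finset.sum_congr rfl fun i _ => hinner i, ← Finset.sum_mul, ← hustar]
      calc algebraMap ℝ B δ * ∑ i, star (c i) * c i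
          ≤ algebraMap ℝ B δ * ∑ I, star (c' I) * c' I := by
            rw [Fin.sum_univ_succ, mul_add]
            exact le_add_of_nonneg_left
              (my_algebraMap_mul_nonneg δ hδ.le _ (star_mul_self_nonneg _))
        _ ≤ ∑ I, ∑ J, star (c' I) * M I J * c' J := hform c'
        _ = ∑ i, ∑ j, star (c i) * S i j * c j := by rw [hexp1, hexp2]
    obtain ⟨T', hT'⟩ := ih S hSsa hSform
    refine ⟨fun r => Fin.cases (Fin.cases p (fun j => q * M 0 j.succ))
      (fun r' => Fin.cases 0 (fun j => T' r' j)) r, ?_⟩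
    intro i j
    induction i using Fin.cases with
    | zero =>
      induction j using Fin.cases with
      | zero =>
        rw [Fin.sum_univ_succ]
        simp [hpsa, hpp]
        exact hs.symm
      | succ j =>
        rw [Fin.sum_univ_succ]
        simp [hpsa, ← mul_assoc, hpq]
    | succ i =>
      induction j using Fin.cases with
      | zero =>
        rw [Fin.sum_univ_succ]
        simp only [Fin.cases_zero, Fin.cases_succ, star_mul, hqsa, star_zero, zero_mul,
          mul_zero, Finset.sum_const_zero, add_zero]
        rw [mul_assoc, hqp, mul_one, ← hMs0 i]
      | succ j =>
        rw [Fin.sum_univ_succ]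
        simp only [Fin.cases_zero, Fin.cases_succ]
        have hsum : ∑ r : Fin m, star (T' r i) * T' r j = S i j := (hT' i j).symm
        rw [hsum, star_mul, hqsa, ← hMs0 i, hS]
        simp only [mul_assoc]
        abel

end MonotonicHelpers

/-- alternating product `a₁ * b₁ * a₂ * b₂ * ⋯` -/
private def myP {A : Type*} [Monoid A] (l : List (A × A)) : A :=
  (l.map fun p => p.1 * p.2).prod

/-- collapsed alternating product `a₁ * ι (Φ b₁) * a₂ * ι (Φ b₂) * ⋯` -/
private def myC {A B : Type*} [Monoid A] (g : B → A) (F : A → B) (l : List (A × A)) : A :=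
  (l.map fun p => p.1 * g (F p.2)).prod

private lemma myP_nil {A : Type*} [Monoid A] : myP ([] : List (A × A)) = 1 := rfl
private lemma myP_cons {A : Type*} [Monoid A] (p : A × A) (l : List (A × A)) :
    myP (p :: l) = (p.1 * p.2) * myP l := by simp [myP]
private lemma myC_nil {A B : Type*} [Monoid A] (g : B → A) (F : A → B) :
    myC g F ([] : List (A × A)) = 1 := rfl
private lemma myC_cons {A B : Type*} [Monoid A] (g : B → A) (F : A → B) (p : A × A)
    (l : List (A × A)) : myC g F (p :: l) = (p.1 * g (F p.2)) * myC g F l := by simp [myC]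
/-- Proposition 6.2: the monotonic product `Φ = Φ₁ ▷ Φ₂` of positive
conditional expectations is positive.  Here `𝔄₁ = 𝔅 ⊕ 𝔄₁⁰` and `𝔄₂ ⊇ 𝔅` are
*-subalgebras of `𝔄`, every element of `𝔄` is a finite sum of alternating products
`b₀ a₁ b₁ ⋯ aₙ bₙ` (`b_j ∈ 𝔄₂`, `a_j ∈ 𝔄₁⁰`), and `Φ` satisfies the defining relations
of the monotonic product. -/
theorem monotonicProduct_positive {B A : Type*}
    [CStarAlgebra B] [PartialOrder B] [StarOrderedRing B]
    [Ring A] [Algebra ℂ A] [StarRing A] [StarModule ℂ A]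
    (ι : B →⋆ₐ[ℂ] A) (hι : Function.Injective ι)
    (A₂ : StarSubalgebra ℂ A) (hA₂B : ∀ c : B, ι c ∈ A₂)
    (A₁₀ : NonUnitalStarSubalgebra ℂ A)
    (hBA₁₀ : ∀ (c : B), ∀ a ∈ A₁₀, ι c * a ∈ A₁₀)
    (hA₁₀B : ∀ (c : B), ∀ a ∈ A₁₀, a * ι c ∈ A₁₀)
    (hdirect : ∀ (c : B), ∀ a ∈ A₁₀, ι c + a = 0 → c = 0 ∧ a = 0)
    (hgen : ∀ x : A, x ∈ AddSubmonoid.closure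
      {y : A | ∃ (n : ℕ) (bs as : ℕ → A),
        (∀ j, j ≤ n → bs j ∈ A₂) ∧ (∀ j, 1 ≤ j → j ≤ n → as j ∈ A₁₀) ∧
        y = bs 0 * (List.ofFn fun t : Fin n => as (t.1 + 1) * bs (t.1 + 1)).prod})
    (Φ : A →ₗ[ℂ] B)
    (hfix : ∀ c : B, Φ (ι c) = c)
    (hbimod : ∀ (c₁ c₂ : B) (x : A), Φ (ι c₁ * x * ι c₂) = c₁ * Φ x * c₂)
    -- positivity of `Φ₁ = Φ|_{𝔄₁}` (with `𝔄₁ = 𝔅 ⊕ 𝔄₁⁰`) and of `Φ₂ = Φ|_{𝔄₂}`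
    (hpos₁ : ∀ (c : B), ∀ a ∈ A₁₀, 0 ≤ Φ (star (ι c + a) * (ι c + a)))
    (hpos₂ : ∀ w ∈ A₂, 0 ≤ Φ (star w * w))
    -- the defining relations of the monotonic product `Φ₁ ▷ Φ₂`
    (hrel₁ : ∀ a ∈ A₁₀, ∀ a' ∈ A₁₀, ∀ w ∈ A₂, ∀ α β : A,
      Φ (α * a * w * a' * β) = Φ (α * a * ι (Φ w) * a' * β))
    (hrel₂ : ∀ a ∈ A₁₀, ∀ a' ∈ A₁₀, ∀ w ∈ A₂, ∀ β : A,
      Φ (a * w * a' * β) = Φ (a * ι (Φ w) * a' * β))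
    (hrel₃ : ∀ a ∈ A₁₀, ∀ a' ∈ A₁₀, ∀ w ∈ A₂, ∀ α : A,
      Φ (α * a * w * a') = Φ (α * a * ι (Φ w) * a'))
    (hrel₄ : ∀ a ∈ A₁₀, ∀ a' ∈ A₁₀, ∀ w ∈ A₂,
      Φ (a * w * a') = Φ (a * ι (Φ w) * a'))
    (hrel₅ : ∀ w ∈ A₂, ∀ a ∈ A₁₀, ∀ β : A, Φ (w * a * β) = Φ w * Φ (a * β))
    (hrel₆ : ∀ w ∈ A₂, ∀ a ∈ A₁₀, Φ (w * a) = Φ w * Φ a)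
    (hrel₇ : ∀ a ∈ A₁₀, ∀ w ∈ A₂, ∀ α : A, Φ (α * a * w) = Φ (α * a) * Φ w)
    (hrel₈ : ∀ a ∈ A₁₀, ∀ w ∈ A₂, Φ (a * w) = Φ a * Φ w) :
    ∀ x : A, 0 ≤ Φ (star x * x) := by
  intro x
  -- basic bimodule facts
  have bimR : ∀ (z : A) (c : B), Φ (z * ι c) = Φ z * c := by
    intro z c
    have := hbimod 1 c z
    simpa [map_one] using this
  have bimL : ∀ (c : B) (z : A), Φ (ι c * z) = c * Φ z := by
    intro c z
    have := hbimod c 1 z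
    simpa [map_one] using this
  -- `Φ` is star-preserving on `A₂` (polarization)
  have hstar₂ : ∀ w ∈ A₂, Φ (star w) = star (Φ w) := by
    have key : ∀ w ∈ A₂, ∀ v ∈ A₂, Φ (star w * v) = star (Φ (star v * w)) := by
      intro w hw v hv
      have sa : ∀ u ∈ A₂, IsSelfAdjoint (Φ (star u * u)) :=
        fun u hu => IsSelfAdjoint.of_nonneg (hpos₂ u hu)
      set X := Φ (star w * v) with hX
      set Y := Φ (star v * w) with hY
      have T1 : IsSelfAdjoint (X + Y) := by
        have e : star (w + v) * (w + v)
            = (star w * w + star v * v) + (star w * v + star v * w) := by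
          rw [star_add, add_mul, mul_add, mul_add]
          abel
        have h := sa (w + v) (add_mem hw hv)
        rw [e, map_add, map_add, map_add] at h
        have := h.sub ((sa w hw).add (sa v hv))
        simpa using this
      have T2 : IsSelfAdjoint (Complex.I • X - Complex.I • Y) := by
        have e : star (w + Complex.I • v) * (w + Complex.I • v)
            = (star w * w + star v * v) + (Complex.I • (star w * v) - Complex.I • (star v * w)) := by
          rw [star_add, star_smul, add_mul, mul_add, mul_add]
          simp only [Complex.star_def, Complex.conj_I, smul_mul_assoc, mul_smul_comm,
            smul_smul, neg_smul, smul_neg, neg_neg, neg_mul, Complex.I_mul_I, one_smul]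
          abel
        have h := sa (w + Complex.I • v) (add_mem hw (SMulMemClass.smul_mem _ hv))
        rw [e, map_add, map_add, map_sub, map_smul, map_smul] at h
        have := h.sub ((sa w hw).add (sa v hv))
        simpa [← hX, ← hY] using this
      -- from T1, T2 deduce `X = star Y`
      have e1 : X + Y = star X + star Y := by
        conv_lhs => rw [← T1.star_eq]
        rw [star_add]
      have e2 : Complex.I • X - Complex.I • Y
          = Complex.I • star Y - Complex.I • star X := by
        conv_lhs => rw [← T2.star_eq]
        rw [star_sub, star_smul, star_smul, Complex.star_def, Complex.conj_I,
          neg_smul, neg_smul, sub_neg_eq_add]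
        abel
      have e2' : X - Y = star Y - star X := by
        have h := e2
        rw [← smul_sub, ← smul_sub] at h
        exact smul_right_injective B Complex.I_ne_zero h
      have e3 : (2 : ℂ) • X = (2 : ℂ) • star Y := by
        have := congrArg₂ (· + ·) e1 e2'
        rw [two_smul, two_smul]
        calc X + X = (X + Y) + (X - Y) := by abel
          _ = (star X + star Y) + (star Y - star X) := by rw [e1, e2']
          _ = star Y + star Y := by abel
      exact smul_right_injective B two_ne_zero e3
    intro w hw
    have h := key w hw 1 (one_mem _)
    rw [mul_one, star_one, one_mul] at h
    rw [h]
  -- right-assoc versions of the relations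
  have R1 : ∀ a ∈ A₁₀, ∀ w ∈ A₂, ∀ a' ∈ A₁₀, ∀ (α β : A),
      Φ (α * (a * (w * (a' * β)))) = Φ (α * (a * (ι (Φ w) * (a' * β)))) := by
    intro a ha w hw a' ha' α β
    have := hrel₁ a ha a' ha' w hw α β
    simpa only [mul_assoc] using this
  have R5 : ∀ w ∈ A₂, ∀ a ∈ A₁₀, ∀ β : A, Φ (w * (a * β)) = Φ w * Φ (a * β) := by
    intro w hw a ha β
    have := hrel₅ w hw a ha β
    simpa only [mul_assoc] using this
  have R7 : ∀ a ∈ A₁₀, ∀ w ∈ A₂, ∀ α : A, Φ (α * (a * w)) = Φ (α * a) * Φ w := by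
    intro a ha w hw α
    have := hrel₇ a ha w hw α
    simpa only [mul_assoc] using this
  -- notation for the collapse
  set Cl : List (A × A) → A := myC (⇑ι) (⇑Φ) with hCl
  -- Lemma A1 : collapsing on the right of `Φ`
  have A1 : ∀ l : List (A × A), (∀ p ∈ l, p.1 ∈ A₁₀ ∧ p.2 ∈ A₂) → ∀ α : A,
      Φ (α * myP l) = Φ (α * Cl l) := by
    intro l
    induction l with
    | nil => intro _ α; simp [myP_nil, hCl, myC_nil]
    | cons p r ih =>
      intro hmem α
      obtain ⟨a, b⟩ := p
      have ha : a ∈ A₁₀ := (hmem (a, b) (List.mem_cons_self)).1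
      have hb : b ∈ A₂ := (hmem (a, b) (List.mem_cons_self)).2
      have hmr : ∀ p ∈ r, p.1 ∈ A₁₀ ∧ p.2 ∈ A₂ :=
        fun p hp => hmem p (List.mem_cons_of_mem _ hp)
      rw [myP_cons, hCl, myC_cons]
      cases r with
      | nil =>
        simp only [myP_nil, myC_nil, mul_one]
        rw [← mul_assoc, ← mul_assoc, hrel₇ a ha b hb α, bimR]
      | cons p' r' =>
        obtain ⟨a', b'⟩ := p'
        have ha' : a' ∈ A₁₀ := (hmr (a', b') (List.mem_cons_self)).1
        have step1 : Φ (α * ((a * b) * myP ((a', b') :: r')))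
            = Φ ((α * (a * ι (Φ b))) * myP ((a', b') :: r')) := by
          rw [myP_cons]
          have := R1 a ha b hb a' ha' α (b' * myP r')
          simp only [mul_assoc] at this ⊢
          exact this
        rw [step1, ih hmr (α * (a * ι (Φ b)))]
        rw [← hCl]
        simp only [mul_assoc]
  -- Lemma A2 : collapsing a middle `A₂` element, working leftwards
  have A2 : ∀ l : List (A × A), (∀ p ∈ l, p.1 ∈ A₁₀ ∧ p.2 ∈ A₂) → ∀ w ∈ A₂, ∀ g : A,
      (g = 1 ∨ ∃ a'' ∈ A₁₀, ∃ β : A, g = a'' * β) →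
      Φ (star (myP l) * (w * g)) = Φ (star (Cl l) * (ι (Φ w) * g)) := by
    intro l
    induction l with
    | nil =>
      intro _ w hw g hg
      simp only [myP_nil, hCl, myC_nil, star_one, one_mul]
      rcases hg with rfl | ⟨a'', ha'', β, rfl⟩
      · rw [mul_one, mul_one, hfix]
      · rw [R5 w hw a'' ha'' β, ← bimL]
    | cons p r ih =>
      intro hmem w hw g hg
      obtain ⟨a, b⟩ := p
      have ha : a ∈ A₁₀ := (hmem (a, b) (List.mem_cons_self)).1
      have hb : b ∈ A₂ := (hmem (a, b) (List.mem_cons_self)).2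
      have hmr : ∀ p ∈ r, p.1 ∈ A₁₀ ∧ p.2 ∈ A₂ :=
        fun p hp => hmem p (List.mem_cons_of_mem _ hp)
      have hCstar : star (Cl ((a, b) :: r)) = star (Cl r) * (ι (Φ (star b)) * star a) := by
        rw [hCl, myC_cons, star_mul, star_mul, ← map_star ι, ← hstar₂ b hb]
      rcases hg with rfl | ⟨a'', ha'', β, rfl⟩
      · -- trailing `g = 1`
        have lhs1 : Φ (star (myP ((a, b) :: r)) * (w * 1))
            = Φ ((star (myP r) * star b * star a) * w) := by
          rw [myP_cons, star_mul, star_mul, mul_one]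
          simp only [mul_assoc]
        have lhs2 : Φ ((star (myP r) * star b * star a) * w)
            = Φ ((star (myP r) * star b * star a) * ι (Φ w)) := by
          rw [hrel₇ (star a) (star_mem ha) w hw (star (myP r) * star b), bimR]
        have lhs3 : Φ ((star (myP r) * star b * star a) * ι (Φ w))
            = Φ (star (myP r) * (star b * (star a * ι (Φ w)))) := by
          simp only [mul_assoc]
        have ihh := ih hmr (star b) (star_mem hb) (star a * ι (Φ w))
          (Or.inr ⟨star a, star_mem ha, ι (Φ w), rfl⟩)
        rw [lhs1, lhs2, lhs3, ihh, hCstar]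
        simp only [mul_assoc, mul_one]
      · -- trailing `g = a'' * β`
        have lhs1 : Φ (star (myP ((a, b) :: r)) * (w * (a'' * β)))
            = Φ ((star (myP r) * star b) * (star a * (w * (a'' * β)))) := by
          rw [myP_cons, star_mul, star_mul]
          simp only [mul_assoc]
        have lhs2 : Φ ((star (myP r) * star b) * (star a * (w * (a'' * β))))
            = Φ (star (myP r) * (star b * (star a * (ι (Φ w) * (a'' * β))))) := by
          have := R1 (star a) (star_mem ha) w hw a'' ha'' (star (myP r) * star b) β
          simp only [mul_assoc] at this ⊢
          exact this
        have ihh := ih hmr (star b) (star_mem hb) (star a * (ι (Φ w) * (a'' * β)))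
          (Or.inr ⟨star a, star_mem ha, ι (Φ w) * (a'' * β), rfl⟩)
        rw [lhs1, lhs2, ihh, hCstar]
        simp only [mul_assoc]
  -- the collapse of a nonempty word lies in `A₁₀`
  have ClMem : ∀ l : List (A × A), (∀ p ∈ l, p.1 ∈ A₁₀ ∧ p.2 ∈ A₂) → l ≠ [] →
      Cl l ∈ A₁₀ := by
    intro l
    induction l with
    | nil => intro _ h; exact absurd rfl h
    | cons p r ih =>
      intro hmem _
      obtain ⟨a, b⟩ := p
      have ha : a ∈ A₁₀ := (hmem (a, b) (List.mem_cons_self)).1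
      have hmr : ∀ p ∈ r, p.1 ∈ A₁₀ ∧ p.2 ∈ A₂ :=
        fun p hp => hmem p (List.mem_cons_of_mem _ hp)
      rw [hCl, myC_cons]
      cases r with
      | nil => simpa [myC_nil] using hA₁₀B (Φ b) a ha
      | cons p' r' =>
        exact mul_mem (hA₁₀B (Φ b) a ha) (ih hmr (by simp))
  -- the collapse is of the form `ι c + a`
  have ClH : ∀ l : List (A × A), (∀ p ∈ l, p.1 ∈ A₁₀ ∧ p.2 ∈ A₂) →
      ∃ (c : B) (aa : A), aa ∈ A₁₀ ∧ Cl l = ι c + aa := by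
    intro l hmem
    cases l with
    | nil => exact ⟨1, 0, zero_mem _, by simp [hCl, myC_nil, map_one]⟩
    | cons p r =>
      exact ⟨0, Cl (p :: r), ClMem (p :: r) hmem (by simp), by simp [map_zero]⟩
  -- the collapse is either `1` or starts with an `A₁₀` letter
  have ClForm : ∀ l : List (A × A), (∀ p ∈ l, p.1 ∈ A₁₀ ∧ p.2 ∈ A₂) →
      Cl l = 1 ∨ ∃ a'' ∈ A₁₀, ∃ β : A, Cl l = a'' * β := by
    intro l hmem
    cases l with
    | nil => exact Or.inl (by simp [hCl, myC_nil])
    | cons p r =>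
      refine Or.inr ⟨p.1, (hmem p (List.mem_cons_self)).1, ι (Φ p.2) * Cl r, ?_⟩
      rw [hCl, myC_cons, mul_assoc, ← hCl]
  -- the pairing lemma for two words
  have PAIR : ∀ (b : A), b ∈ A₂ → ∀ l : List (A × A), (∀ p ∈ l, p.1 ∈ A₁₀ ∧ p.2 ∈ A₂) →
      ∀ (b' : A), b' ∈ A₂ → ∀ l' : List (A × A), (∀ p ∈ l', p.1 ∈ A₁₀ ∧ p.2 ∈ A₂) →
      Φ (star (b * myP l) * (b' * myP l'))
        = Φ (star (Cl l) * (ι (Φ (star b * b')) * Cl l')) := by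
    intro b hb l hl b' hb' l' hl'
    have e : star (b * myP l) * (b' * myP l')
        = (star (myP l) * (star b * b')) * myP l' := by
      rw [star_mul]
      simp only [mul_assoc]
    rw [e, A1 l' hl' (star (myP l) * (star b * b'))]
    have := A2 l hl (star b * b') (mul_mem (star_mem hb) hb') (Cl l') (ClForm l' hl')
    simp only [mul_assoc] at this ⊢
    exact this
  -- decompose `x` into a sum of words
  obtain ⟨L, hLmem, hLsum⟩ := AddSubmonoid.exists_list_of_mem_closure (hgen x)
  set m := L.length with hm
  have hdata : ∀ i : Fin m, ∃ (b : A) (l : List (A × A)), b ∈ A₂ ∧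
      (∀ p ∈ l, p.1 ∈ A₁₀ ∧ p.2 ∈ A₂) ∧ L.get i = b * myP l := by
    intro i
    obtain ⟨n, bs, as, hbs, has, hy⟩ := hLmem (L.get i) (L.get_mem i)
    refine ⟨bs 0, List.ofFn (fun t : Fin n => (as (t.1 + 1), bs (t.1 + 1))),
      hbs 0 (Nat.zero_le n), ?_, ?_⟩
    · intro p hp
      rw [List.mem_ofFn] at hp
      obtain ⟨t, rfl⟩ := hp
      exact ⟨has (t.1 + 1) (Nat.succ_le_succ (Nat.zero_le _)) t.isLt,
        hbs (t.1 + 1) t.isLt⟩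
    · rw [hy]
      congr 1
      rw [myP, List.map_ofFn]
      rfl
  choose bf lf hbmem hlmem heq using hdata
  set h : Fin m → A := fun i => Cl (lf i) with hh
  set M : Fin m → Fin m → B := fun i j => Φ (star (bf i) * bf j) with hM
  -- rewrite the goal as a double sum
  have hx : x = ∑ i : Fin m, L.get i := by
    rw [← hLsum]
    conv_lhs => rw [← List.ofFn_get L]
    exact List.sum_ofFn
  have hgoal : Φ (star x * x) = ∑ i : Fin m, ∑ j : Fin m,
      Φ (star (h i) * (ι (M i j) * h j)) := by
    rw [hx, star_sum, Finset.sum_mul_sum, map_sum]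
    refine Finset.sum_congr rfl fun i _ => ?_
    rw [map_sum]
    refine Finset.sum_congr rfl fun j _ => ?_
    rw [heq i, heq j]
    exact PAIR (bf i) (hbmem i) (lf i) (hlmem i) (bf j) (hbmem j) (lf j) (hlmem j)
  rw [hgoal]
  -- ===== positivity of the Gram-type expression =====
  -- properties of the Gram matrix `M`
  have hMsa : ∀ i j, M j i = star (M i j) := by
    intro i j
    rw [hM]
    simp only []
    rw [← hstar₂ (star (bf i) * bf j) (mul_mem (star_mem (hbmem i)) (hbmem j)),
      star_mul, star_star]
  have hMform : ∀ c : Fin m → B, 0 ≤ ∑ i, ∑ j, star (c i) * M i j * c j := by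
    intro c
    have hv : (∑ j, bf j * ι (c j)) ∈ A₂ :=
      sum_mem fun j _ => mul_mem (hbmem j) (hA₂B _)
    have h0 := hpos₂ _ hv
    have hexp : Φ (star (∑ j, bf j * ι (c j)) * (∑ j, bf j * ι (c j)))
        = ∑ i, ∑ j, star (c i) * M i j * c j := by
      rw [star_sum, Finset.sum_mul_sum, map_sum]
      refine Finset.sum_congr rfl fun i _ => ?_
      rw [map_sum]
      refine Finset.sum_congr rfl fun j _ => ?_
      have e : star (bf i * ι (c i)) * (bf j * ι (c j))
          = ι (star (c i)) * (star (bf i) * bf j) * ι (c j) := by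
        rw [star_mul, ← map_star ι]
        simp only [mul_assoc]
      rw [e, hbimod, hM]
    rw [hexp] at h0
    exact h0
  -- the `H = B ⊕ A₁₀` structure of the collapses
  have hHmem : ∀ i, ∃ (c : B) (aa : A), aa ∈ A₁₀ ∧ h i = ι c + aa :=
    fun i => ClH (lf i) (hlmem i)
  choose cs aas haas hhs using hHmem
  -- apply the ε-shifted Cholesky factorization and take limits
  refine my_nonneg_of_forall_pos _ (∑ i, Φ (star (h i) * h i)) ?_
  intro ε hε
  set Mδ : Fin m → Fin m → B := fun i j => M i j + if i = j then algebraMap ℝ B ε else 0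
    with hMδ
  have hdsa : star (algebraMap ℝ B ε) = algebraMap ℝ B ε := by
    rw [Algebra.algebraMap_eq_smul_one, star_smul, star_trivial, star_one]
  have hMδsa : ∀ i j, Mδ j i = star (Mδ i j) := by
    intro i j
    rw [hMδ]
    simp only [star_add, ← hMsa i j, apply_ite (star : B → B), hdsa, star_zero]
    congr 1
    simp [eq_comm]
  have hMδform : ∀ c : Fin m → B,
      algebraMap ℝ B ε * (∑ i, star (c i) * c i) ≤ ∑ i, ∑ j, star (c i) * Mδ i j * c j := by
    intro c
    have hsplit : ∑ i, ∑ j, star (c i) * Mδ i j * c j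
        = (∑ i, ∑ j, star (c i) * M i j * c j)
          + algebraMap ℝ B ε * ∑ i, star (c i) * c i := by
      rw [hMδ]
      simp only [mul_add, add_mul]
      rw [Finset.sum_congr rfl fun i _ => Finset.sum_add_distrib, Finset.sum_add_distrib]
      congr 1
      have hone : ∀ i : Fin m, ∑ j, star (c i) * (if i = j then algebraMap ℝ B ε else 0) * c j
          = star (c i) * algebraMap ℝ B ε * c i := by
        intro i
        simp [mul_ite, ite_mul, Finset.sum_ite_eq]
      rw [Finset.sum_congr rfl fun i _ => hone i, Finset.mul_sum]
      refine Finset.sum_congr rfl fun i _ => ?_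
      rw [← Algebra.commutes ε (star (c i)), mul_assoc]
    rw [hsplit]
    exact le_add_of_nonneg_left (hMform c)
  obtain ⟨T, hT⟩ := my_cholesky ε hε m Mδ hMδsa hMδform
  -- positivity of the rows
  have hrow : ∀ r : Fin m, 0 ≤ Φ (star (∑ j, ι (T r j) * h j) * (∑ j, ι (T r j) * h j)) := by
    intro r
    have hv : ∑ j, ι (T r j) * h j
        = ι (∑ j, T r j * cs j) + ∑ j, ι (T r j) * aas j := by
      rw [map_sum, ← Finset.sum_add_distrib]
      refine Finset.sum_congr rfl fun j _ => ?_
      rw [hhs j, mul_add, map_mul]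
    rw [hv]
    exact hpos₁ _ _ (sum_mem fun j _ => hBA₁₀ _ _ (haas j))
  -- expansion of the rows
  have hrowexp : ∀ r : Fin m, Φ (star (∑ j, ι (T r j) * h j) * (∑ j, ι (T r j) * h j))
      = ∑ i, ∑ j, Φ (star (h i) * (ι (star (T r i) * T r j) * h j)) := by
    intro r
    rw [star_sum, Finset.sum_mul_sum, map_sum]
    refine Finset.sum_congr rfl fun i _ => ?_
    rw [map_sum]
    refine Finset.sum_congr rfl fun j _ => ?_
    have e : star (ι (T r i) * h i) * (ι (T r j) * h j)
        = star (h i) * (ι (star (T r i) * T r j) * h j) := by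
      rw [star_mul, ← map_star ι, map_mul]
      simp only [mul_assoc]
    rw [e]
  -- summing the rows gives the shifted Gram expression
  have hswap : ∑ r : Fin m, ∑ i, ∑ j, Φ (star (h i) * (ι (star (T r i) * T r j) * h j))
      = ∑ i, ∑ j, Φ (star (h i) * (ι (Mδ i j) * h j)) := by
    rw [Finset.sum_comm]
    refine Finset.sum_congr rfl fun i _ => ?_
    rw [Finset.sum_comm]
    refine Finset.sum_congr rfl fun j _ => ?_
    rw [hT i j, map_sum, Finset.sum_mul, Finset.mul_sum, map_sum]
  -- final accounting
  have htotal : (0:B) ≤ ∑ r : Fin m,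
      Φ (star (∑ j, ι (T r j) * h j) * (∑ j, ι (T r j) * h j)) :=
    Finset.sum_nonneg fun r _ => hrow r
  rw [Finset.sum_congr rfl fun r _ => hrowexp r, hswap] at htotal
  have hιd : (ι (algebraMap ℝ B ε) : A) = algebraMap ℝ A ε := by
    rw [IsScalarTower.algebraMap_apply ℝ ℂ B, IsScalarTower.algebraMap_apply ℝ ℂ A]
    exact (AlgHomClass.commutes ι _).symm ▸ rfl
  have hterm : ∀ i j : Fin m, Φ (star (h i) * (ι (Mδ i j) * h j))
      = Φ (star (h i) * (ι (M i j) * h j))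
        + (if i = j then ε • Φ (star (h i) * h i) else 0) := by
    intro i j
    rw [hMδ]
    simp only []
    rw [map_add, add_mul, mul_add, map_add]
    congr 1
    rcases eq_or_ne i j with rfl | hne
    · rw [if_pos rfl, if_pos rfl, hιd, ← Algebra.smul_def, mul_smul_comm,
        LinearMap.map_smul_of_tower]
    · simp [if_neg hne]
  have hfin : ∑ i, ∑ j, Φ (star (h i) * (ι (Mδ i j) * h j))
      = (∑ i, ∑ j, Φ (star (h i) * (ι (M i j) * h j)))
        + ε • ∑ i, Φ (star (h i) * h i) := by
    rw [Finset.sum_congr rfl fun i _ => Finset.sum_congr rfl fun j _ => hterm i j]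
    rw [Finset.sum_congr rfl fun i _ => Finset.sum_add_distrib, Finset.sum_add_distrib]
    congr 1
    rw [Finset.smul_sum]
    refine Finset.sum_congr rfl fun i _ => ?_
    simp [Finset.sum_ite_eq]
  rw [hfin] at htotal
  exact htotal
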